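/- Let C be an exact category (with exact structure D). In a commutative diagram whose rows are D-conflations X ↣ Y ↠ Z and X' ↣ Y' ↠ Z with vertical morphisms f : X → X', g : Y → Y' and identity on Z, the square X Y Y' X' is both a pushout and a pullback. -/

import Mathlib

open CategoryTheory Limits ZeroObject

universe v u

variable {C : Type u} [CategoryTheory.Category.{v} C] [CategoryTheory.Preadditive C]
  [CategoryTheory.Limits.HasZeroObject C] [CategoryTheory.Limits.HasFiniteBiproducts C]

/-- An exact structure on an additive category in the sense of Quillen–Keller:
a class of kernel-cokernel pairs (conflations) satisfying the axioms
[E0], [E1], [E2], [E2ᵒᵖ]. -/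
structure ExactStructure (C : Type u) [CategoryTheory.Category.{v} C]
    [CategoryTheory.Preadditive C] [CategoryTheory.Limits.HasZeroObject C]
    [CategoryTheory.Limits.HasFiniteBiproducts C] where
  /-- the distinguished class of short exact sequences -/
  conf : ∀ ⦃X Y Z : C⦄, (X ⟶ Y) → (Y ⟶ Z) → Prop
  /-- every conflation is a kernel-cokernel pair -/
  kerCoker : ∀ {X Y Z : C} (i : X ⟶ Y) (d : Y ⟶ Z), conf i d →
    ∃ w : i ≫ d = 0,
      Nonempty (IsLimit (KernelFork.ofι i w)) ∧
      Nonempty (IsColimit (CokernelCofork.ofπ d w))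
  /-- [E0] the identity of the zero object is a deflation -/
  id_zero_deflation : ∃ (X : C) (i : X ⟶ (0 : C)), conf i (𝟙 (0 : C))
  /-- [E1] the composition of two deflations is a deflation -/
  comp_deflation : ∀ {Y Z W : C} (d : Y ⟶ Z) (e : Z ⟶ W),
    (∃ (X : C) (i : X ⟶ Y), conf i d) → (∃ (X : C) (i : X ⟶ Z), conf i e) →
    ∃ (X : C) (i : X ⟶ Y), conf i (d ≫ e)
  /-- [E2] pullbacks of deflations along arbitrary morphisms exist and are deflations -/
  pullback_deflation : ∀ {Y Z Z' : C} (d : Y ⟶ Z) (f : Z' ⟶ Z),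
    (∃ (X : C) (i : X ⟶ Y), conf i d) →
    ∃ (P : C) (p₁ : P ⟶ Y) (p₂ : P ⟶ Z') (comm : p₁ ≫ d = p₂ ≫ f),
      Nonempty (IsLimit (PullbackCone.mk p₁ p₂ comm)) ∧
      ∃ (X : C) (i : X ⟶ P), conf i p₂
  /-- [E2ᵒᵖ] pushouts of inflations along arbitrary morphisms exist and are inflations -/
  pushout_inflation : ∀ {X Y X' : C} (i : X ⟶ Y) (f : X ⟶ X'),
    (∃ (Z : C) (d : Y ⟶ Z), conf i d) →
    ∃ (Q : C) (q₁ : Y ⟶ Q) (q₂ : X' ⟶ Q) (comm : i ≫ q₁ = f ≫ q₂),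
      Nonempty (IsColimit (PushoutCocone.mk q₁ q₂ comm)) ∧
      ∃ (Z : C) (d : Q ⟶ Z), conf q₂ d

/-- `i` is an `E`-inflation. -/
def ExactStructure.Inflation (E : ExactStructure C) {X Y : C} (i : X ⟶ Y) : Prop :=
  ∃ (Z : C) (d : Y ⟶ Z), E.conf i d

/-- `d` is an `E`-deflation. -/
def ExactStructure.Deflation (E : ExactStructure C) {Y Z : C} (d : Y ⟶ Z) : Prop :=
  ∃ (X : C) (i : X ⟶ Y), E.conf i d

/-- `X` is `D`-`E`-divisible: every `D`-inflation starting at `X` is an `E`-inflation. -/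
def Divisible (D E : ExactStructure C) (X : C) : Prop :=
  ∀ {Y : C} (i : X ⟶ Y), D.Inflation i → E.Inflation i

/-- `Z` is `D`-`E`-flat: every `D`-deflation ending at `Z` is an `E`-deflation. -/
def Flat (D E : ExactStructure C) (Z : C) : Prop :=
  ∀ {Y : C} (d : Y ⟶ Z), D.Deflation d → E.Deflation d

/-- `Ext¹_D(Z, X) = 0`: every `D`-conflation `X ↣ Y ↠ Z` splits. -/
def ExtZero (D : ExactStructure C) (Z X : C) : Prop :=
  ∀ {Y : C} (i : X ⟶ Y) (d : Y ⟶ Z), D.conf i d → ∃ r : Y ⟶ X, i ≫ r = 𝟙 X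

/-- `X` is `D`-injective: every `D`-inflation starting at `X` splits. -/
def DInjective (D : ExactStructure C) (X : C) : Prop :=
  ∀ {Y Z : C} (i : X ⟶ Y) (d : Y ⟶ Z), D.conf i d → ∃ r : Y ⟶ X, i ≫ r = 𝟙 X

/-- `Z` is `D`-projective: every `D`-deflation ending at `Z` splits. -/
def DProjective (D : ExactStructure C) (Z : C) : Prop :=
  ∀ {X Y : C} (i : X ⟶ Y) (d : Y ⟶ Z), D.conf i d → ∃ s : Z ⟶ Y, s ≫ d = 𝟙 Z

/-- `E` is the exact structure `D`-projectively generated by `M`: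
its conflations are exactly the `D`-conflations with respect to which
every object of `M` is projective. -/
def ProjGenBy (D E : ExactStructure C) (M : Set C) : Prop :=
  ∀ {X Y Z : C} (i : X ⟶ Y) (d : Y ⟶ Z),
    E.conf i d ↔ (D.conf i d ∧ ∀ M' ∈ M, ∀ g : M' ⟶ Z, ∃ h : M' ⟶ Y, h ≫ d = g)

/-- `E` is the exact structure `D`-injectively generated by `M`:
its conflations are exactly the `D`-conflations with respect to which
every object of `M` is injective. -/
def InjGenBy (D E : ExactStructure C) (M : Set C) : Prop :=
  ∀ {X Y Z : C} (i : X ⟶ Y) (d : Y ⟶ Z),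
    E.conf i d ↔ (D.conf i d ∧ ∀ M' ∈ M, ∀ g : X ⟶ M', ∃ h : Y ⟶ M', i ≫ h = g)

/-- `𝓐^{⊥_D}`. -/
def rightPerp (D : ExactStructure C) (A : Set C) : Set C :=
  {X | ∀ a ∈ A, ExtZero D a X}

/-- `^{⊥_D}𝓐`. -/
def leftPerp (D : ExactStructure C) (A : Set C) : Set C :=
  {X | ∀ a ∈ A, ExtZero D X a}

/-- `(𝓐, 𝓑)` is a `D`-cotorsion pair. -/
def CotorsionPair (D : ExactStructure C) (A B : Set C) : Prop :=
  rightPerp D A = B ∧ leftPerp D B = A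

/-- `C` has enough `D`-injectives. -/
def EnoughInjectives (D : ExactStructure C) : Prop :=
  ∀ X : C, ∃ (Y Z : C) (i : X ⟶ Y) (d : Y ⟶ Z), D.conf i d ∧ DInjective D Y

/-- `C` has enough `D`-projectives. -/
def EnoughProjectives (D : ExactStructure C) : Prop :=
  ∀ Z : C, ∃ (X Y : C) (i : X ⟶ Y) (d : Y ⟶ Z), D.conf i d ∧ DProjective D Y

/-- In a commutative diagram whose rows are `D`-conflations with identity on
the cokernel side, the left square is both a pushout and a pullback. -/
theorem conflation_square_pushout_pullback
    (D : ExactStructure C) {X Y Z X' Y' : C}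
    (i : X ⟶ Y) (d : Y ⟶ Z) (i' : X' ⟶ Y') (d' : Y' ⟶ Z)
    (f : X ⟶ X') (g : Y ⟶ Y')
    (h1 : D.conf i d) (h2 : D.conf i' d')
    (c1 : i ≫ g = f ≫ i') (c2 : g ≫ d' = d) :
    Nonempty (IsColimit (PushoutCocone.mk g i' c1)) ∧
    Nonempty (IsLimit (PullbackCone.mk i f c1)) := by
  obtain ⟨w1, ⟨hk1⟩, ⟨hc1⟩⟩ := D.kerCoker i d h1
  obtain ⟨w2, ⟨hk2⟩, ⟨hc2⟩⟩ := D.kerCoker i' d' h2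
  have mono_i : Mono i := ⟨fun u v h => Fork.IsLimit.hom_ext hk1 (by simpa using h)⟩
  have mono_i' : Mono i' := ⟨fun u v h => Fork.IsLimit.hom_ext hk2 (by simpa using h)⟩
  have epi_d : Epi d := ⟨fun u v h => Cofork.IsColimit.hom_ext hc1 (by simpa using h)⟩
  -- kernel lifting through `i` and `i'`
  have lift1 : ∀ {W : C} (l : W ⟶ Y), l ≫ d = 0 → ∃ t : W ⟶ X, t ≫ i = l := fun l hl =>
    ⟨(KernelFork.IsLimit.lift' hk1 l hl).1, (KernelFork.IsLimit.lift' hk1 l hl).2⟩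
  have lift2 : ∀ {W : C} (l : W ⟶ Y'), l ≫ d' = 0 → ∃ t : W ⟶ X', t ≫ i' = l := fun l hl =>
    ⟨(KernelFork.IsLimit.lift' hk2 l hl).1, (KernelFork.IsLimit.lift' hk2 l hl).2⟩
  have desc2 : ∀ {W : C} (l : Y' ⟶ W), i' ≫ l = 0 → ∃ t : Z ⟶ W, d' ≫ t = l := fun l hl =>
    ⟨(CokernelCofork.IsColimit.desc' hc2 l hl).1, (CokernelCofork.IsColimit.desc' hc2 l hl).2⟩
  constructor
  · -- the pushout part
    obtain ⟨P, p₁, p₂, comm, ⟨hP⟩, N, k, hk⟩ := D.pullback_deflation d d' ⟨X, i, h1⟩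
    obtain ⟨wk, ⟨hkk⟩, ⟨hkc⟩⟩ := D.kerCoker k p₂ hk
    have hPext : ∀ {W : C} (u v : W ⟶ P), u ≫ p₁ = v ≫ p₁ → u ≫ p₂ = v ≫ p₂ → u = v := by
      intro W u v e1 e2
      exact PullbackCone.IsLimit.hom_ext hP e1 e2
    have hPlift : ∀ {W : C} (a : W ⟶ Y) (b : W ⟶ Y'), a ≫ d = b ≫ d' →
        ∃ l : W ⟶ P, l ≫ p₁ = a ∧ l ≫ p₂ = b := by
      intro W a b hab
      obtain ⟨l, hl1, hl2⟩ := PullbackCone.IsLimit.lift' hP a b hab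
      exact ⟨l, hl1, hl2⟩
    have deskk : ∀ {W : C} (l : P ⟶ W), k ≫ l = 0 → ∃ t : Y' ⟶ W, p₂ ≫ t = l := fun l hl =>
      ⟨(CokernelCofork.IsColimit.desc' hkc l hl).1, (CokernelCofork.IsColimit.desc' hkc l hl).2⟩
    -- the section `s : Y ⟶ P`
    obtain ⟨s, hs1, hs2⟩ := hPlift (𝟙 Y) g (by simpa using c2.symm)
    -- the map `x : X' ⟶ P`
    obtain ⟨x, hx1, hx2⟩ := hPlift 0 i' (by simp [w2])
    have mono_x : Mono x := by
      have : Mono (x ≫ p₂) := by rw [hx2]; exact mono_i'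
      exact mono_of_mono x p₂
    -- the retraction `ρ : P ⟶ X'` with `ρ ≫ x = 𝟙 P - p₁ ≫ s`
    have hρcond : ((𝟙 P - p₁ ≫ s) ≫ p₂) ≫ d' = 0 := by
      simp [Preadditive.sub_comp, reassoc_of% hs2, c2, comm]
    obtain ⟨ρ, hρ⟩ := lift2 ((𝟙 P - p₁ ≫ s) ≫ p₂) hρcond
    have hρx : ρ ≫ x = 𝟙 P - p₁ ≫ s := by
      apply hPext
      · simp [hx1, Preadditive.sub_comp, reassoc_of% hs1, hs1]
      · simp [hx2, hρ]
    have hsρ : s ≫ ρ = 0 := by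
      rw [← cancel_mono x, Category.assoc, hρx]
      simp [Preadditive.comp_sub, reassoc_of% hs1]
    have hxρ : x ≫ ρ = 𝟙 X' := by
      rw [← cancel_mono x, Category.assoc, hρx]
      simp [Preadditive.comp_sub, reassoc_of% hx1]
    -- the descent data for an arbitrary cocone
    have key : ∀ {T : C} (a : Y ⟶ T) (b : X' ⟶ T), i ≫ a = f ≫ b →
        k ≫ (p₁ ≫ a + ρ ≫ b) = 0 := by
      intro T a b hab
      have hkp1 : (k ≫ p₁) ≫ d = 0 := by
        rw [Category.assoc, comm, ← Category.assoc, wk, zero_comp]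
      obtain ⟨m, hm⟩ := lift1 (k ≫ p₁) hkp1
      have hkρ : k ≫ ρ = -(m ≫ f) := by
        have h0 : (m ≫ f + k ≫ ρ) ≫ i' = 0 ≫ i' := by
          rw [zero_comp, Preadditive.add_comp, Category.assoc, Category.assoc, hρ, ← c1]
          have hm' : m ≫ i ≫ g = k ≫ p₁ ≫ g := by
            rw [← Category.assoc, hm, Category.assoc]
          rw [hm']
          simp [Preadditive.comp_sub, reassoc_of% hs2, hs2, wk]
        have := (cancel_mono i').mp h0
        linear_combination (norm := abel) this
      have hm'' : k ≫ p₁ ≫ a = m ≫ i ≫ a := by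
        rw [← Category.assoc, ← hm, Category.assoc]
      rw [Preadditive.comp_add, hm'', hab, ← Category.assoc k ρ b, hkρ]
      simp
    have descs : ∀ sc : PushoutCocone i f,
        ∃ u : Y' ⟶ sc.pt, g ≫ u = sc.inl ∧ i' ≫ u = sc.inr := by
      intro sc
      obtain ⟨u, hu⟩ := deskk (p₁ ≫ sc.inl + ρ ≫ sc.inr) (key sc.inl sc.inr sc.condition)
      refine ⟨u, ?_, ?_⟩
      · rw [← hs2, Category.assoc, hu]
        simp [Preadditive.comp_add, reassoc_of% hs1, reassoc_of% hsρ]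
      · rw [← hx2, Category.assoc, hu]
        simp [Preadditive.comp_add, reassoc_of% hx1, reassoc_of% hxρ]
    choose desc hd1 hd2 using descs
    refine ⟨PushoutCocone.IsColimit.mk c1 desc hd1 hd2 ?_⟩
    intro sc m hl hr
    have hz0 : i' ≫ (m - desc sc) = 0 := by
      rw [Preadditive.comp_sub, hr, hd2, sub_self]
    obtain ⟨z, hz⟩ := desc2 (m - desc sc) hz0
    have hdz : d ≫ z = d ≫ 0 := by
      rw [comp_zero, ← c2, Category.assoc, hz, Preadditive.comp_sub, hl, hd1, sub_self]
    have : z = 0 := (cancel_epi d).mp hdz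
    rw [this, comp_zero] at hz
    exact sub_eq_zero.mp hz.symm
  · -- the pullback part
    have lifts : ∀ sc : PullbackCone g i',
        ∃ t : sc.pt ⟶ X, t ≫ i = sc.fst ∧ t ≫ f = sc.snd := by
      intro sc
      have h0 : sc.fst ≫ d = 0 := by
        rw [← c2, ← Category.assoc, sc.condition, Category.assoc, w2, comp_zero]
      obtain ⟨t, ht⟩ := lift1 sc.fst h0
      refine ⟨t, ht, ?_⟩
      rw [← cancel_mono i', Category.assoc, ← c1, ← Category.assoc, ht, sc.condition]
    choose lift hl1 hl2 using lifts
    refine ⟨PullbackCone.IsLimit.mk c1 lift hl1 hl2 ?_⟩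
    intro sc m h₁ h₂
    rw [← cancel_mono i, hl1, h₁]
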